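/- (Pathwise stationary Ornstein–Uhlenbeck solution, part of Lemma 7.1.) Let ω : ℝ → ℝ be continuous with ω(s)/s → 0 as s → −∞. For t ∈ ℝ define the Wiener shift (θ_t ω)(s) := ω(t+s) − ω(t) and z(t) := −∫_{−∞}^0 e^{s} (θ_t ω)(s) ds. Then: (i) for every t the integral defining z(t) converges absolutely and z(t) = ω(t) − ∫_{−∞}^t e^{u−t} ω(u) du; (ii) t ↦ z(t) is continuous; and (iii) z solves the Langevin equation dz + z dt = dW pathwise in integral form: for all r ≤ t, z(t) − z(r) + ∫_r^t z(u) du = ω(t) − ω(r). -/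

import Mathlib

open Filter Topology MeasureTheory

open intervalIntegral in
private lemma expHalf_integrableOn (a : ℝ) :
    IntegrableOn (fun u : ℝ => Real.exp (u / 2)) (Set.Iic a) := by
  have hc : Continuous fun u : ℝ => Real.exp (u / 2) :=
    Real.continuous_exp.comp (continuous_id.div_const 2)
  refine integrableOn_Iic_of_intervalIntegral_norm_bounded (2 * Real.exp (a / 2)) a
    (fun y => hc.integrableOn_Ioc) tendsto_id ?_
  filter_upwards with y
  simp only [id_eq]
  have h1 : (∫ x in y..a, ‖Real.exp (x / 2)‖) = ∫ x in y..a, Real.exp (x / 2) := by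
    simp [Real.norm_eq_abs, Real.abs_exp]
  rw [h1, integral_comp_div (f := Real.exp) (c := 2) two_ne_zero, integral_exp]
  have := Real.exp_pos (y / 2)
  simp only [smul_eq_mul]
  nlinarith

private lemma aux_integrableOn (f : ℝ → ℝ) (hf : Continuous f) (M c : ℝ)
    (hb : ∀ s ≤ M, |f s| ≤ c + |s|) (a : ℝ) :
    IntegrableOn (fun u => Real.exp u * f u) (Set.Iic a) := by
  set m := min (min M a) 0 with hm
  have hma : m ≤ a := le_trans (le_trans (min_le_left _ _) (min_le_right _ _)) le_rfl
  have hsplit : Set.Iic a ⊆ Set.Iic m ∪ Set.Ioc m a := by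
    intro x hx
    by_cases h : x ≤ m
    · exact Or.inl h
    · exact Or.inr ⟨lt_of_not_ge h, hx⟩
  refine (IntegrableOn.union ?_ ?_).mono_set hsplit
  · have hmaj : IntegrableOn (fun u => |c| * Real.exp u + 2 * Real.exp (u / 2))
        (Set.Iic m) :=
      ((integrableOn_exp_Iic m).const_mul |c|).add ((expHalf_integrableOn m).const_mul 2)
    refine Integrable.mono' hmaj
      (Real.continuous_exp.mul hf).aestronglyMeasurable ?_
    filter_upwards [ae_restrict_mem measurableSet_Iic] with u hu
    have huM : u ≤ M := le_trans hu (le_trans (min_le_left _ _) (min_le_left _ _))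
    have hu0 : u ≤ 0 := le_trans hu (min_le_right _ _)
    have h1 : |f u| ≤ c + |u| := hb u huM
    have habs : |u| = -u := abs_of_nonpos hu0
    have hexp2 : Real.exp u = Real.exp (u / 2) * Real.exp (u / 2) := by
      rw [← Real.exp_add]; ring_nf
    have h2 : (-u) * Real.exp (u / 2) ≤ 2 := by
      have h3 := Real.add_one_le_exp (-(u / 2))
      have h4 : Real.exp (-(u / 2)) * Real.exp (u / 2) = 1 := by
        rw [← Real.exp_add]; simp
      nlinarith [Real.exp_pos (u / 2)]
    have hnorm : ‖Real.exp u * f u‖ = Real.exp u * |f u| := by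
      rw [Real.norm_eq_abs, abs_mul, Real.abs_exp]
    rw [hnorm]
    have hcle : c ≤ |c| := le_abs_self c
    nlinarith [Real.exp_pos u, Real.exp_pos (u / 2), abs_nonneg (f u)]
  · exact (Real.continuous_exp.mul hf).integrableOn_Ioc

/-- Pathwise stationary Ornstein–Uhlenbeck solution: for a continuous path `ω` with
`ω s / s → 0` as `s → −∞`, setting `z t = −∫_{−∞}^0 e^s (θ_t ω)(s) ds` with the Wiener
shift `(θ_t ω)(s) = ω(t+s) − ω(t)`, the defining integrals converge absolutely,
`z t = ω t − ∫_{−∞}^t e^{u−t} ω u du`, `z` is continuous, and `z` solves the Langevin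
equation `dz + z dt = dW` pathwise in integral form. -/
theorem pathwise_ou_solution
    (ω : ℝ → ℝ) (hω : Continuous ω)
    (hsub : Tendsto (fun s => ω s / s) atBot (𝓝 0))
    (z : ℝ → ℝ)
    (hz : ∀ t : ℝ, z t = -∫ s in Set.Iic (0:ℝ), Real.exp s * (ω (t + s) - ω t)) :
    -- (i) absolute convergence of the defining integrals and the closed formula
    (∀ t : ℝ,
      IntegrableOn (fun s => Real.exp s * (ω (t + s) - ω t)) (Set.Iic (0:ℝ)) ∧
      IntegrableOn (fun u => Real.exp (u - t) * ω u) (Set.Iic t) ∧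
      z t = ω t - ∫ u in Set.Iic t, Real.exp (u - t) * ω u) ∧
    -- (ii) continuity of the trajectory
    Continuous z ∧
    -- (iii) the pathwise integral form of `dz + z dt = dW`
    (∀ r t : ℝ, r ≤ t → z t - z r + ∫ u in r..t, z u = ω t - ω r) := by
  -- Step 1: sublinear bound on ω near −∞
  obtain ⟨M, hM⟩ : ∃ M : ℝ, ∀ s ≤ M, |ω s| ≤ |s| := by
    have h1 : ∀ᶠ s in atBot, dist (ω s / s) 0 < 1 :=
      Metric.tendsto_nhds.mp hsub 1 one_pos
    have h2 : ∀ᶠ s : ℝ in atBot, s < 0 := eventually_lt_atBot 0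
    obtain ⟨M, hM⟩ := eventually_atBot.mp (h1.and h2)
    refine ⟨M, fun s hs => ?_⟩
    obtain ⟨hd, hneg⟩ := hM s hs
    have hsne : s ≠ 0 := ne_of_lt hneg
    have : |ω s / s| < 1 := by rwa [Real.dist_eq, sub_zero] at hd
    have habs : |ω s| = |ω s / s| * |s| := by
      rw [← abs_mul, div_mul_cancel₀ _ hsne]
    rw [habs]
    calc |ω s / s| * |s| ≤ 1 * |s| :=
          mul_le_mul_of_nonneg_right this.le (abs_nonneg s)
      _ = |s| := one_mul _
  -- Step 2: integrability facts
  have hInt : ∀ a : ℝ, IntegrableOn (fun u => Real.exp u * ω u) (Set.Iic a) := by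
    intro a
    refine aux_integrableOn ω hω M 0 (fun s hs => ?_) a
    simpa using hM s hs
  have hIntShift : ∀ t : ℝ,
      IntegrableOn (fun s => Real.exp s * (ω (t + s) - ω t)) (Set.Iic (0:ℝ)) := by
    intro t
    refine aux_integrableOn (fun s => ω (t + s) - ω t)
      ((hω.comp (continuous_const.add continuous_id)).sub continuous_const)
      (M - t) (|ω t| + |t|) (fun s hs => ?_) 0
    have hts : t + s ≤ M := by linarith
    have h1 : |ω (t + s)| ≤ |t + s| := hM _ hts
    have h2 : |t + s| ≤ |t| + |s| := abs_add_le t s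
    calc |ω (t + s) - ω t| ≤ |ω (t + s)| + |ω t| := abs_sub _ _
      _ ≤ |ω t| + |t| + |s| := by linarith
  have hInt2 : ∀ t : ℝ, IntegrableOn (fun u => Real.exp (u - t) * ω u) (Set.Iic t) := by
    intro t
    have heq : (fun u => Real.exp (u - t) * ω u)
        = fun u => Real.exp (-t) * (Real.exp u * ω u) := by
      funext u
      rw [Real.exp_sub, Real.exp_neg]
      field_simp
    rw [heq]
    exact (hInt t).const_mul _
  -- Step 3: change of variables, closed formula
  have hshift : ∀ t : ℝ, (∫ s in Set.Iic (0:ℝ), Real.exp s * ω (t + s))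
      = ∫ u in Set.Iic t, Real.exp (u - t) * ω u := by
    intro t
    have hkey : ∀ s : ℝ,
        Set.indicator (Set.Iic (0:ℝ)) (fun s => Real.exp s * ω (t + s)) s
          = Set.indicator (Set.Iic t) (fun u => Real.exp (u - t) * ω u) (s + t) := by
      intro s
      simp only [Set.indicator_apply, Set.mem_Iic]
      by_cases hs : s ≤ 0
      · rw [if_pos hs, if_pos (by linarith : s + t ≤ t), add_sub_cancel_right, add_comm s t]
      · rw [if_neg hs, if_neg (by intro h; exact hs (by linarith))]
    calc (∫ s in Set.Iic (0:ℝ), Real.exp s * ω (t + s))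
        = ∫ s, Set.indicator (Set.Iic (0:ℝ)) (fun s => Real.exp s * ω (t + s)) s := by
          rw [integral_indicator measurableSet_Iic]
      _ = ∫ s, Set.indicator (Set.Iic t) (fun u => Real.exp (u - t) * ω u) (s + t) := by
          simp_rw [hkey]
      _ = ∫ u, Set.indicator (Set.Iic t) (fun u => Real.exp (u - t) * ω u) u :=
          integral_add_right_eq_self _ t
      _ = ∫ u in Set.Iic t, Real.exp (u - t) * ω u :=
          integral_indicator measurableSet_Iic
  have hIntConst : ∀ t : ℝ,
      IntegrableOn (fun s : ℝ => Real.exp s * ω t) (Set.Iic (0:ℝ)) := by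
    intro t
    have h : IntegrableOn (fun s : ℝ => ω t * Real.exp s) (Set.Iic (0:ℝ)) :=
      (integrableOn_exp_Iic 0).const_mul (ω t)
    simpa [mul_comm] using h
  have hIntOm : ∀ t : ℝ,
      IntegrableOn (fun s : ℝ => Real.exp s * ω (t + s)) (Set.Iic (0:ℝ)) := by
    intro t
    have : (fun s : ℝ => Real.exp s * ω (t + s))
        = fun s => (Real.exp s * (ω (t + s) - ω t)) + Real.exp s * ω t := by
      funext s; ring
    rw [this]
    exact (hIntShift t).add (hIntConst t)
  have hclosed : ∀ t : ℝ, z t = ω t - ∫ u in Set.Iic t, Real.exp (u - t) * ω u := by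
    intro t
    rw [hz t]
    have hsplit : (∫ s in Set.Iic (0:ℝ), Real.exp s * (ω (t + s) - ω t))
        = (∫ s in Set.Iic (0:ℝ), Real.exp s * ω (t + s))
          - ∫ s in Set.Iic (0:ℝ), Real.exp s * ω t := by
      rw [← integral_sub (hIntOm t) (hIntConst t)]
      congr 1
      funext s
      ring
    have hconst : (∫ s in Set.Iic (0:ℝ), Real.exp s * ω t) = ω t := by
      rw [integral_mul_const, integral_exp_Iic_zero, one_mul]
    rw [hsplit, hconst, hshift t]
    ring
  -- Step 4: primitive and derivative structure
  set F0 : ℝ := ∫ u in Set.Iic (0:ℝ), Real.exp u * ω u with hF0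
  set G : ℝ → ℝ := fun b => ∫ u in (0:ℝ)..b, Real.exp u * ω u with hG
  have hF : ∀ t : ℝ, (∫ u in Set.Iic t, Real.exp u * ω u) = F0 + G t := by
    intro t
    have := intervalIntegral.integral_Iic_sub_Iic (hInt 0) (hInt t)
    rw [hG]
    dsimp only
    linarith [this]
  have hGd : ∀ b : ℝ, HasDerivAt G (Real.exp b * ω b) b := fun b =>
    ((Real.continuous_exp.mul hω).integral_hasStrictDerivAt 0 b).hasDerivAt
  have hpull : ∀ t : ℝ, (∫ u in Set.Iic t, Real.exp (u - t) * ω u)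
      = Real.exp (-t) * (F0 + G t) := by
    intro t
    have heq : (fun u => Real.exp (u - t) * ω u)
        = fun u => Real.exp (-t) * (Real.exp u * ω u) := by
      funext u
      rw [Real.exp_sub, Real.exp_neg]
      field_simp
    rw [heq, integral_const_mul, hF t]
  have hzeq : ∀ t : ℝ, z t = ω t - Real.exp (-t) * (F0 + G t) := by
    intro t
    rw [hclosed t, hpull t]
  set φ : ℝ → ℝ := fun u => Real.exp (-u) * (F0 + G u) with hφ
  have hφd : ∀ u : ℝ, HasDerivAt φ (z u) u := by
    intro u
    have he : HasDerivAt (fun v : ℝ => Real.exp (-v)) (-Real.exp (-u)) u := by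
      have := (Real.hasDerivAt_exp (-u)).comp u (hasDerivAt_neg u)
      simp only [mul_neg, mul_one] at this
      exact this
    have hg : HasDerivAt (fun v => F0 + G v) (Real.exp u * ω u) u := (hGd u).const_add F0
    have hprod := he.mul hg
    have hsimp : -Real.exp (-u) * (F0 + G u) + Real.exp (-u) * (Real.exp u * ω u)
        = z u := by
      have h1 : Real.exp (-u) * Real.exp u = 1 := by
        rw [← Real.exp_add]; simp
      rw [hzeq u, ← mul_assoc, h1, one_mul]
      ring
    rw [hφ]
    have := hprod
    rw [hsimp] at this
    exact this
  have hφcont : Continuous φ :=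
    continuous_iff_continuousAt.mpr fun u => (hφd u).differentiableAt.continuousAt
  have hzcont : Continuous z := by
    have : z = fun t => ω t - φ t := funext fun t => hzeq t
    rw [this]
    exact hω.sub hφcont
  refine ⟨fun t => ⟨hIntShift t, hInt2 t, hclosed t⟩, hzcont, ?_⟩
  intro r t hrt
  have hFTC : (∫ u in r..t, z u) = φ t - φ r :=
    intervalIntegral.integral_eq_sub_of_hasDerivAt (fun u _ => hφd u)
      (hzcont.intervalIntegrable r t)
  rw [hFTC]
  have h1 := hzeq t
  have h2 := hzeq r
  rw [hφ]
  dsimp only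
  linarith [h1, h2]
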